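/- arXiv:1806.09842 — 3 statements merged into one kernel-verified Lean document; each statement's English description precedes it below -/
import Mathlib

section
/- Let g be a convex differentiable function on a product of convex sets C = ⊗_{r∈[R]} C_r, and suppose the weak strong convexity estimate g(y*) ≥ g(y) + ⟨∇g(y), y* − y⟩ + (1/μ)d²(y, Ξ) holds along with g(y) − g* ≥ (1/μ)d²(y, Ξ), where Ξ is the solution set and d the distance to Ξ. Then ⟨∇g(y), y* − y⟩ ≤ (2/(μ+1))[g* − g(y) − d²(y,Ξ)], where y* is the projection of y onto Ξ. -/
open scoped RealInnerProductSpace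

/-- Weak strong convexity estimate: if
`g(y*) ≥ g(y) + ⟨∇g(y), y* − y⟩ + (1/μ) d²(y, Ξ)` and `g(y) − g* ≥ (1/μ) d²(y, Ξ)`,
where `y*` is the projection of `y` onto the solution set (so `d(y,Ξ) = ‖y − y*‖` and
`g* = g y*`), then `⟨∇g(y), y* − y⟩ ≤ (2/(μ+1)) [g* − g(y) − d²(y, Ξ)]`. -/
theorem stmt15 {H : Type*} [NormedAddCommGroup H] [InnerProductSpace ℝ H]
    (g : H → ℝ) (G : H → H) (μ : ℝ) (hμ : 1 ≤ μ) (y ystar : H)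
    (h1 : g y + ⟪G y, ystar - y⟫ + (1 / μ) * ‖y - ystar‖ ^ 2 ≤ g ystar)
    (h2 : (1 / μ) * ‖y - ystar‖ ^ 2 ≤ g y - g ystar) :
    ⟪G y, ystar - y⟫ ≤ (2 / (μ + 1)) * (g ystar - g y - ‖y - ystar‖ ^ 2) := by
  have hμ0 : (0:ℝ) < μ := lt_of_lt_of_le one_pos hμ
  have h3 : (1 / μ) * ‖y - ystar‖ ^ 2 ≤ -(g ystar - g y) := by linarith
  rw [div_mul_eq_mul_div, le_div_iff₀ (by linarith)]
  have key : ⟪G y, ystar - y⟫ ≤ (g ystar - g y) - (1/μ) * ‖y - ystar‖ ^ 2 := by linarith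
  have h4 : ‖y - ystar‖ ^ 2 = μ * ((1/μ) * ‖y - ystar‖ ^ 2) := by
    field_simp
  rw [h4]
  set k := (1/μ) * ‖y - ystar‖ ^ 2 with hk
  nlinarith [mul_nonneg (sub_nonneg.mpr hμ) (by linarith : 0 ≤ -(g ystar - g y) - k),
    mul_le_mul_of_nonneg_right key (by linarith : (0:ℝ) ≤ μ + 1)]
end

section
/- For the PageRank problem on a graph, the vector p satisfying p = (1−α)s + α A D⁻¹ p is (under the change of variables x = D⁻¹p, a = D⁻¹s, W = ((1−α)/α)D) the unique minimizer of ‖x − a‖²_W + Σ_{ij∈E}(x_i − x_j)², assuming α ∈ (0,1) and D is the positive diagonal degree matrix. -/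
/-- PageRank as a QDSFM problem: if `p` satisfies the fixed-point equation
`p = (1−α) s + α A D⁻¹ p`, then under the change of variables `x = D⁻¹ p`, `a = D⁻¹ s`,
`W = ((1−α)/α) D`, the point `x` is the unique minimizer of
`‖x − a‖²_W + Σ_{ij ∈ E} (x_i − x_j)²`. -/
theorem stmt17 {N : ℕ} (A : Fin N → Fin N → ℝ) (hsymm : ∀ i j, A i j = A j i)
    (hnn : ∀ i j, 0 ≤ A i j) (D : Fin N → ℝ) (hD : ∀ i, D i = ∑ j, A i j)
    (hDpos : ∀ i, 0 < D i) (α : ℝ) (hα : α ∈ Set.Ioo (0 : ℝ) 1) (s p : Fin N → ℝ)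
    (hfix : ∀ i, p i = (1 - α) * s i + α * ∑ j, A i j * (p j / D j))
    (Φ : (Fin N → ℝ) → ℝ)
    (hΦ : Φ = fun x => ∑ i, ((1 - α) / α) * D i * (x i - s i / D i) ^ 2 +
      (1 / 2) * ∑ i, ∑ j, A i j * (x i - x j) ^ 2) :
    ∀ z : Fin N → ℝ, Φ (fun i => p i / D i) ≤ Φ z ∧
      (Φ z = Φ (fun i => p i / D i) → z = fun i => p i / D i) := by
  obtain ⟨hα0, hα1⟩ := hα
  have hαne : α ≠ 0 := ne_of_gt hα0
  set x : Fin N → ℝ := fun i => p i / D i with hxdef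
  -- the gradient of Φ vanishes at x
  have hgrad : ∀ i, ((1 - α) / α) * D i * (x i - s i / D i) + ∑ j, A i j * (x i - x j) = 0 := by
    intro i
    have hDi : D i ≠ 0 := (hDpos i).ne'
    have h1 : ∑ j, A i j * (x i - x j) = D i * x i - ∑ j, A i j * x j := by
      rw [hD i, Finset.sum_mul, ← Finset.sum_sub_distrib]
      exact Finset.sum_congr rfl fun j _ => by ring
    have hfx := hfix i
    have hxj : (∑ j, A i j * x j) = ∑ j, A i j * (p j / D j) := rfl
    rw [h1, hxj]
    have hxi : x i = p i / D i := rfl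
    rw [hxi]
    field_simp
    simp only [mul_div_assoc]
    linear_combination hfx
  intro z
  subst hΦ
  simp only
  set h : Fin N → ℝ := fun i => z i - x i with hhdef
  have hz : ∀ i, z i = x i + h i := fun i => by simp [hhdef]
  -- symmetry identity
  have hsym2 : ∑ i, ∑ j, A i j * (x i - x j) * (h i - h j)
      = 2 * ∑ i, h i * ∑ j, A i j * (x i - x j) := by
    have h1 : ∑ i, ∑ j, A i j * (x i - x j) * h j
        = - ∑ i, ∑ j, A i j * (x i - x j) * h i := by
      rw [Finset.sum_comm, ← Finset.sum_neg_distrib]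
      refine Finset.sum_congr rfl fun i _ => ?_
      rw [← Finset.sum_neg_distrib]
      refine Finset.sum_congr rfl fun j _ => ?_
      rw [hsymm j i]; ring
    have h2 : ∑ i, ∑ j, A i j * (x i - x j) * (h i - h j)
        = (∑ i, ∑ j, A i j * (x i - x j) * h i) - ∑ i, ∑ j, A i j * (x i - x j) * h j := by
      rw [← Finset.sum_sub_distrib]
      refine Finset.sum_congr rfl fun i _ => ?_
      rw [← Finset.sum_sub_distrib]
      exact Finset.sum_congr rfl fun j _ => by ring
    rw [h2, h1, sub_neg_eq_add, ← two_mul]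
    congr 1
    refine Finset.sum_congr rfl fun i _ => ?_
    rw [Finset.mul_sum]
    exact Finset.sum_congr rfl fun j _ => by ring
  -- master decomposition
  have master : (∑ i, ((1 - α) / α) * D i * (z i - s i / D i) ^ 2 +
        (1 / 2) * ∑ i, ∑ j, A i j * (z i - z j) ^ 2)
      = (∑ i, ((1 - α) / α) * D i * (x i - s i / D i) ^ 2 +
        (1 / 2) * ∑ i, ∑ j, A i j * (x i - x j) ^ 2)
      + ((∑ i, ((1 - α) / α) * D i * (h i) ^ 2)
        + (1 / 2) * ∑ i, ∑ j, A i j * (h i - h j) ^ 2) := by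
    have e1 : ∑ i, ((1 - α) / α) * D i * (z i - s i / D i) ^ 2
        = ∑ i, (((1 - α) / α) * D i * (x i - s i / D i) ^ 2
            + ((1 - α) / α) * D i * (h i) ^ 2
            + 2 * h i * (((1 - α) / α) * D i * (x i - s i / D i))) := by
      refine Finset.sum_congr rfl fun i _ => ?_
      rw [hz i]; ring
    have e2 : ∑ i, ∑ j, A i j * (z i - z j) ^ 2
        = (∑ i, ∑ j, A i j * (x i - x j) ^ 2)
          + (∑ i, ∑ j, A i j * (h i - h j) ^ 2)
          + ∑ i, ∑ j, 2 * (A i j * (x i - x j) * (h i - h j)) := by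
      rw [← Finset.sum_add_distrib, ← Finset.sum_add_distrib]
      refine Finset.sum_congr rfl fun i _ => ?_
      rw [← Finset.sum_add_distrib, ← Finset.sum_add_distrib]
      refine Finset.sum_congr rfl fun j _ => ?_
      rw [hz i, hz j]; ring
    have e3 : ∑ i, ∑ j, 2 * (A i j * (x i - x j) * (h i - h j))
        = 2 * ∑ i, ∑ j, A i j * (x i - x j) * (h i - h j) := by
      rw [Finset.mul_sum]
      exact Finset.sum_congr rfl fun i _ => (Finset.mul_sum _ _ _).symm
    have e4 : ∑ i, (((1 - α) / α) * D i * (x i - s i / D i) ^ 2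
            + ((1 - α) / α) * D i * (h i) ^ 2
            + 2 * h i * (((1 - α) / α) * D i * (x i - s i / D i)))
        = (∑ i, ((1 - α) / α) * D i * (x i - s i / D i) ^ 2)
          + (∑ i, ((1 - α) / α) * D i * (h i) ^ 2)
          + ∑ i, 2 * h i * (((1 - α) / α) * D i * (x i - s i / D i)) := by
      rw [← Finset.sum_add_distrib, ← Finset.sum_add_distrib]
    -- cross terms vanish
    have cross : (∑ i, 2 * h i * (((1 - α) / α) * D i * (x i - s i / D i)))
        + 2 * ∑ i, h i * ∑ j, A i j * (x i - x j) = 0 := by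
      have e5 : (∑ i, 2 * h i * (((1 - α) / α) * D i * (x i - s i / D i)))
          + 2 * ∑ i, h i * ∑ j, A i j * (x i - x j)
          = ∑ i, (2 * h i) * ((((1 - α) / α) * D i * (x i - s i / D i))
              + ∑ j, A i j * (x i - x j)) := by
        rw [Finset.mul_sum, ← Finset.sum_add_distrib]
        exact Finset.sum_congr rfl fun i _ => by ring
      rw [e5]
      simp only [hgrad, mul_zero, Finset.sum_const_zero]
    rw [e1, e4, e2, e3, hsym2]
    linarith [cross]
  constructor
  · rw [master]
    have hcpos : ∀ i, (0:ℝ) < ((1 - α) / α) * D i := fun i =>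
      mul_pos (div_pos (by linarith) hα0) (hDpos i)
    have t1 : (0:ℝ) ≤ ∑ i, ((1 - α) / α) * D i * (h i) ^ 2 :=
      Finset.sum_nonneg fun i _ => mul_nonneg (hcpos i).le (sq_nonneg _)
    have t2 : (0:ℝ) ≤ ∑ i, ∑ j, A i j * (h i - h j) ^ 2 :=
      Finset.sum_nonneg fun i _ => Finset.sum_nonneg fun j _ =>
        mul_nonneg (hnn i j) (sq_nonneg _)
    linarith
  · intro heq
    rw [master] at heq
    have hcpos : ∀ i, (0:ℝ) < ((1 - α) / α) * D i := fun i =>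
      mul_pos (div_pos (by linarith) hα0) (hDpos i)
    have t1 : (0:ℝ) ≤ ∑ i, ((1 - α) / α) * D i * (h i) ^ 2 :=
      Finset.sum_nonneg fun i _ => mul_nonneg (hcpos i).le (sq_nonneg _)
    have t2 : (0:ℝ) ≤ ∑ i, ∑ j, A i j * (h i - h j) ^ 2 :=
      Finset.sum_nonneg fun i _ => Finset.sum_nonneg fun j _ =>
        mul_nonneg (hnn i j) (sq_nonneg _)
    have hS1 : ∑ i, ((1 - α) / α) * D i * (h i) ^ 2 = 0 := by linarith
    have hall : ∀ i ∈ Finset.univ, ((1 - α) / α) * D i * (h i) ^ 2 = 0 :=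
      (Finset.sum_eq_zero_iff_of_nonneg fun i _ =>
        mul_nonneg (hcpos i).le (sq_nonneg _)).mp hS1
    funext i
    have hzero := hall i (Finset.mem_univ i)
    have hhi : (h i) ^ 2 = 0 := by
      rcases mul_eq_zero.mp hzero with hbad | hsq
      · exact absurd hbad (hcpos i).ne'
      · exact hsq
    have hhi0 : h i = 0 := by
      have := sq_eq_zero_iff.mp hhi
      exact this
    have hzi : z i - x i = 0 := hhi0
    show z i = x i
    linarith
end

section
/- For a directed hyperedge with head set H and tail set T on ground set [N], the function f(z) = max_{i∈H} z_i − min_{j∈T} z_j (when this is ≥ 0, extended appropriately) is the Lovász extension of the submodular function F with F(S) = 1 if S∩H ≠ ∅ and ([N]∖S)∩T ≠ ∅, and F(S) = 0 otherwise; in particular F is submodular. -/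
/-- For a directed hyperedge with nonempty head set `H` and tail set `T`, the function
`F(S) = 1` if `S ∩ H ≠ ∅` and `([N] \ S) ∩ T ≠ ∅` (else `0`) is submodular, and its
Lovász extension (defined via the sorting formula) equals
`z ↦ max (max_{i∈H} z_i − min_{j∈T} z_j) 0`. -/
theorem stmt19 {N : ℕ} (hN : 0 < N) (H T : Finset (Fin N)) (hH : H.Nonempty)
    (hT : T.Nonempty) (F : Finset (Fin N) → ℝ)
    (hF : ∀ S : Finset (Fin N),
      F S = if (S ∩ H).Nonempty ∧ ((Finset.univ \ S) ∩ T).Nonempty then 1 else 0) :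
    (∀ S₁ S₂ : Finset (Fin N), F (S₁ ∪ S₂) + F (S₁ ∩ S₂) ≤ F S₁ + F S₂) ∧
      ∀ (z : Fin N → ℝ) (σ : Equiv.Perm (Fin N)),
        (∀ k l : Fin N, k ≤ l → z (σ l) ≤ z (σ k)) →
        (∑ k : Fin N,
            F (Finset.univ.filter (fun j => (σ.symm j : ℕ) ≤ (k : ℕ))) *
              (z (σ k) - if h : (k : ℕ) + 1 < N then z (σ ⟨(k : ℕ) + 1, h⟩) else 0)) =
          max (H.sup' hH z - T.inf' hT z) 0 := by
  constructor
  · -- Submodularity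
    intro S₁ S₂
    have h3 : ((S₁ ∪ S₂) ∩ H).Nonempty ∧ ((Finset.univ \ (S₁ ∪ S₂)) ∩ T).Nonempty →
        ((S₁ ∩ S₂) ∩ H).Nonempty ∧ ((Finset.univ \ (S₁ ∩ S₂)) ∩ T).Nonempty →
        (((S₁ ∩ H).Nonempty ∧ ((Finset.univ \ S₁) ∩ T).Nonempty) ∧
          ((S₂ ∩ H).Nonempty ∧ ((Finset.univ \ S₂) ∩ T).Nonempty)) := by
      rintro ⟨_, ⟨x, hx⟩⟩ ⟨⟨y, hy⟩, _⟩
      simp only [Finset.mem_inter, Finset.mem_sdiff, Finset.mem_univ, Finset.mem_union,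
        true_and, not_or] at hx hy
      exact ⟨⟨⟨y, Finset.mem_inter.2 ⟨hy.1.1, hy.2⟩⟩,
              ⟨x, by simp [Finset.mem_sdiff, hx.1.1, hx.2]⟩⟩,
             ⟨⟨y, Finset.mem_inter.2 ⟨hy.1.2, hy.2⟩⟩,
              ⟨x, by simp [Finset.mem_sdiff, hx.1.2, hx.2]⟩⟩⟩
    have h1 : ((S₁ ∪ S₂) ∩ H).Nonempty ∧ ((Finset.univ \ (S₁ ∪ S₂)) ∩ T).Nonempty →
        (((S₁ ∩ H).Nonempty ∧ ((Finset.univ \ S₁) ∩ T).Nonempty) ∨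
          ((S₂ ∩ H).Nonempty ∧ ((Finset.univ \ S₂) ∩ T).Nonempty)) := by
      rintro ⟨⟨y, hy⟩, ⟨x, hx⟩⟩
      simp only [Finset.mem_inter, Finset.mem_sdiff, Finset.mem_univ, Finset.mem_union,
        true_and, not_or] at hx hy
      rcases hy.1 with h | h
      · exact Or.inl ⟨⟨y, Finset.mem_inter.2 ⟨h, hy.2⟩⟩,
          ⟨x, by simp [Finset.mem_sdiff, hx.1.1, hx.2]⟩⟩
      · exact Or.inr ⟨⟨y, Finset.mem_inter.2 ⟨h, hy.2⟩⟩,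
          ⟨x, by simp [Finset.mem_sdiff, hx.1.2, hx.2]⟩⟩
    have h2 : ((S₁ ∩ S₂) ∩ H).Nonempty ∧ ((Finset.univ \ (S₁ ∩ S₂)) ∩ T).Nonempty →
        (((S₁ ∩ H).Nonempty ∧ ((Finset.univ \ S₁) ∩ T).Nonempty) ∨
          ((S₂ ∩ H).Nonempty ∧ ((Finset.univ \ S₂) ∩ T).Nonempty)) := by
      rintro ⟨⟨y, hy⟩, ⟨x, hx⟩⟩
      simp only [Finset.mem_inter, Finset.mem_sdiff, Finset.mem_univ, true_and] at hx hy
      by_cases hx1 : x ∈ S₁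
      · have hx2 : x ∉ S₂ := fun hx2 => hx.1 ⟨hx1, hx2⟩
        exact Or.inr ⟨⟨y, Finset.mem_inter.2 ⟨hy.1.2, hy.2⟩⟩,
          ⟨x, by simp [Finset.mem_sdiff, hx2, hx.2]⟩⟩
      · exact Or.inl ⟨⟨y, Finset.mem_inter.2 ⟨hy.1.1, hy.2⟩⟩,
          ⟨x, by simp [Finset.mem_sdiff, hx1, hx.2]⟩⟩
    rw [hF, hF, hF, hF]
    split_ifs with a b c d
    all_goals norm_num
    all_goals first
      | exact absurd (h3 ‹_› ‹_›).1 ‹_›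
      | exact absurd (h3 ‹_› ‹_›).2 ‹_›
      | exact (h1 ‹_›).elim (fun h => absurd h ‹_›) (fun h => absurd h ‹_›)
      | exact (h2 ‹_›).elim (fun h => absurd h ‹_›) (fun h => absurd h ‹_›)
  · -- Lovász extension
    intro z σ hmono
    have hHim : (H.image σ.symm).Nonempty := hH.image _
    have hTim : (T.image σ.symm).Nonempty := hT.image _
    obtain ⟨jH, hjH, hjHeq⟩ := Finset.mem_image.1 ((H.image σ.symm).min'_mem hHim)
    obtain ⟨jT, hjT, hjTeq⟩ := Finset.mem_image.1 ((T.image σ.symm).max'_mem hTim)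
    set iH : Fin N := (H.image σ.symm).min' hHim with hiHdef
    set iT : Fin N := (T.image σ.symm).max' hTim with hiTdef
    -- z (σ iH) is the max over H, z (σ iT) is the min over T
    have zH : z (σ iH) = H.sup' hH z := by
      apply le_antisymm
      · have : z (σ iH) = z jH := by rw [← hjHeq]; simp
        rw [this]; exact Finset.le_sup' z hjH
      · apply Finset.sup'_le
        intro j hj
        have : z j = z (σ (σ.symm j)) := by simp
        rw [this]
        exact hmono iH (σ.symm j) (Finset.min'_le _ _ (Finset.mem_image_of_mem _ hj))
    have zT : z (σ iT) = T.inf' hT z := by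
      apply le_antisymm
      · apply Finset.le_inf'
        intro j hj
        have : z j = z (σ (σ.symm j)) := by simp
        rw [this]
        exact hmono (σ.symm j) iT (Finset.le_max' _ _ (Finset.mem_image_of_mem _ hj))
      · have : z (σ iT) = z jT := by rw [← hjTeq]; simp
        rw [this]; exact Finset.inf'_le z hjT
    -- Evaluate F on the level sets
    have FS : ∀ k : Fin N,
        F (Finset.univ.filter (fun j => (σ.symm j : ℕ) ≤ (k : ℕ))) =
          if (iH : ℕ) ≤ (k : ℕ) ∧ (k : ℕ) < (iT : ℕ) then 1 else 0 := by
      intro k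
      rw [hF]
      congr 1
      rw [eq_iff_iff]
      constructor
      · rintro ⟨⟨y, hy⟩, ⟨x, hx⟩⟩
        simp only [Finset.mem_inter, Finset.mem_filter, Finset.mem_sdiff, Finset.mem_univ,
          true_and, not_le] at hx hy
        constructor
        · have h1 : iH ≤ σ.symm y := Finset.min'_le _ _ (Finset.mem_image_of_mem _ hy.2)
          exact le_trans (Fin.le_def.mp h1) hy.1
        · have h1 : σ.symm x ≤ iT := Finset.le_max' _ _ (Finset.mem_image_of_mem _ hx.2)
          exact lt_of_lt_of_le hx.1 (Fin.le_def.mp h1)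
      · rintro ⟨ha, hb⟩
        constructor
        · refine ⟨jH, Finset.mem_inter.2 ⟨Finset.mem_filter.2 ⟨Finset.mem_univ _, ?_⟩, hjH⟩⟩
          calc ((σ.symm jH : Fin N) : ℕ) = (iH : ℕ) := by rw [hjHeq]
            _ ≤ (k : ℕ) := ha
        · refine ⟨jT, Finset.mem_inter.2 ⟨Finset.mem_sdiff.2 ⟨Finset.mem_univ _, ?_⟩, hjT⟩⟩
          simp only [Finset.mem_filter, Finset.mem_univ, true_and, not_le]
          calc (k : ℕ) < (iT : ℕ) := hb
            _ = ((σ.symm jT : Fin N) : ℕ) := by rw [hjTeq]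
    -- Pass to natural number indices
    set a : ℕ := (iH : ℕ) with hadef
    set b : ℕ := (iT : ℕ) with hbdef
    have ha : a < N := iH.isLt
    have hb : b < N := iT.isLt
    set g : ℕ → ℝ := fun k => if h : k < N then z (σ ⟨k, h⟩) else 0 with hg
    have key : (∑ k : Fin N,
        F (Finset.univ.filter (fun j => (σ.symm j : ℕ) ≤ (k : ℕ))) *
          (z (σ k) - if h : (k : ℕ) + 1 < N then z (σ ⟨(k : ℕ) + 1, h⟩) else 0)) =
        ∑ k ∈ Finset.Ico a b, (g k - g (k + 1)) := by
      have step : ∀ k : Fin N,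
          F (Finset.univ.filter (fun j => (σ.symm j : ℕ) ≤ (k : ℕ))) *
            (z (σ k) - if h : (k : ℕ) + 1 < N then z (σ ⟨(k : ℕ) + 1, h⟩) else 0) =
          if a ≤ (k : ℕ) ∧ (k : ℕ) < b then g (k : ℕ) - g ((k : ℕ) + 1) else 0 := by
        intro k
        rw [FS k]
        by_cases hc : a ≤ (k : ℕ) ∧ (k : ℕ) < b
        · rw [if_pos hc, if_pos hc, one_mul]
          have hk1 : (k : ℕ) + 1 < N := by omega
          rw [dif_pos hk1]
          have : g (k : ℕ) = z (σ k) := by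
            rw [hg]; simp only [k.isLt, dif_pos]
          rw [this, hg]
          simp only [hk1, dif_pos]
        · rw [if_neg hc, if_neg hc, zero_mul]
      calc (∑ k : Fin N, F (Finset.univ.filter (fun j => (σ.symm j : ℕ) ≤ (k : ℕ))) *
              (z (σ k) - if h : (k : ℕ) + 1 < N then z (σ ⟨(k : ℕ) + 1, h⟩) else 0))
          = ∑ k : Fin N, (if a ≤ (k : ℕ) ∧ (k : ℕ) < b then g (k : ℕ) - g ((k : ℕ) + 1) else 0) := by
            exact Finset.sum_congr rfl (fun k _ => step k)
        _ = ∑ k ∈ Finset.range N, (if a ≤ k ∧ k < b then g k - g (k + 1) else 0) :=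
            Fin.sum_univ_eq_sum_range (fun k => if a ≤ k ∧ k < b then g k - g (k + 1) else 0) N
        _ = ∑ k ∈ (Finset.range N).filter (fun k => a ≤ k ∧ k < b), (g k - g (k + 1)) :=
            (Finset.sum_filter _ _).symm
        _ = ∑ k ∈ Finset.Ico a b, (g k - g (k + 1)) := by
            congr 1
            ext k
            simp only [Finset.mem_filter, Finset.mem_range, Finset.mem_Ico]
            omega
    rw [key]
    by_cases hab : a < b
    · have tel : ∑ k ∈ Finset.Ico a b, (g k - g (k + 1)) = g a - g b := by
        rw [Finset.sum_Ico_eq_sub _ (le_of_lt hab), Finset.sum_range_sub' g,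
          Finset.sum_range_sub' g]
        ring
      rw [tel]
      have hga : g a = z (σ iH) := by rw [hg]; simp only [ha, dif_pos]; rfl
      have hgb : g b = z (σ iT) := by rw [hg]; simp only [hb, dif_pos]; rfl
      rw [hga, hgb, zH, zT]
      have : z (σ iT) ≤ z (σ iH) := hmono iH iT (by rw [Fin.le_def]; omega)
      rw [max_eq_left]
      rw [← zH, ← zT]
      linarith
    · have : Finset.Ico a b = ∅ := Finset.Ico_eq_empty (by omega)
      rw [this, Finset.sum_empty]
      have : z (σ iH) ≤ z (σ iT) := hmono iT iH (by rw [Fin.le_def]; omega)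
      rw [max_eq_right]
      rw [← zH, ← zT]
      linarith
end
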